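/- Let α be a primitive third root of unity, w = (1,1,1,1,1) ∈ ℂ⁵, and let ω be the real alternating form on ℂ⁵ (viewed as a real vector space) given by ω(u,v) = (2/√3)·Im(Σₖ uₖ·conj(vₖ)). Then ω(w/(α−1), αw/(α−1)) = −5/3; in particular, this value is not an integer. -/

import Mathlib

/-- With `α = e^{2πi/3}`, `w = (1,…,1) ∈ ℂ⁵` and the alternating form
`ω(u,v) = (2/√3)·Im(Σₖ uₖ·conj(vₖ))`, one has `ω(w/(α−1), αw/(α−1)) = −5/3`,
which is not an integer. -/
theorem stmt_4 :
    let α : ℂ := Complex.exp (2 * Real.pi * Complex.I / 3)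
    let ω : (Fin 5 → ℂ) → (Fin 5 → ℂ) → ℝ := fun u v =>
      (2 / Real.sqrt 3) * (∑ k, u k * (starRingEnd ℂ) (v k)).im
    let w : Fin 5 → ℂ := fun _ => 1
    ω ((α - 1)⁻¹ • w) ((α / (α - 1)) • w) = -5 / 3 ∧
      ¬ ∃ n : ℤ, (n : ℝ) = -5 / 3 := by
  intro α ω w
  have hs : Real.sqrt 3 > 0 := by positivity
  have hsq : Real.sqrt 3 * Real.sqrt 3 = 3 := Real.mul_self_sqrt (by norm_num)
  have hα : α = ⟨-1/2, Real.sqrt 3 / 2⟩ := by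
    show Complex.exp (2 * Real.pi * Complex.I / 3) = _
    have : (2 * (Real.pi : ℂ) * Complex.I / 3) = ((2 * Real.pi / 3 : ℝ) : ℂ) * Complex.I := by
      push_cast; ring
    rw [this, Complex.exp_mul_I]
    have h1 : (2 * Real.pi / 3) = Real.pi - Real.pi / 3 := by ring
    rw [h1, Complex.ext_iff]
    simp only [Complex.add_re, Complex.add_im, Complex.mul_re, Complex.mul_im, Complex.I_re,
      Complex.I_im, Complex.cos_ofReal_re, Complex.cos_ofReal_im, Complex.sin_ofReal_re,
      Complex.sin_ofReal_im, Real.cos_pi_sub, Real.sin_pi_sub,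
      Real.cos_pi_div_three, Real.sin_pi_div_three]
    norm_num
  refine ⟨?_, ?_⟩
  · have hw : ∀ x : Fin 5, w x = 1 := fun _ => rfl
    show (2 / Real.sqrt 3) *
      (∑ k : Fin 5, ((α - 1)⁻¹ • w) k * (starRingEnd ℂ) (((α / (α - 1)) • w) k)).im = -5 / 3
    simp only [Pi.smul_apply, smul_eq_mul, w, mul_one]
    rw [Finset.sum_const]
    simp only [Finset.card_univ, Fintype.card_fin, nsmul_eq_mul]
    rw [hα]
    simp only [Complex.mul_im, Complex.mul_re, Complex.div_re, Complex.div_im, Complex.inv_re, Complex.inv_im,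
      Complex.normSq_apply, Complex.sub_re, Complex.sub_im, Complex.one_re, Complex.one_im,
      Complex.conj_re, Complex.conj_im]
    have h2 : ((-1:ℝ)/2 - 1) * ((-1)/2 - 1) + Real.sqrt 3 / 2 * (Real.sqrt 3 / 2) = 3 := by
      nlinarith [hsq]
    simp only [Complex.natCast_re, Complex.natCast_im, Nat.cast_ofNat, Complex.re_ofNat, Complex.im_ofNat]
    field_simp
    nlinarith [hsq, hs]
  · rintro ⟨n, hn⟩
    have h3 : (3:ℝ) * n = -5 := by rw [hn]; ring
    have h4 : (3:ℤ) * n = -5 := by exact_mod_cast h3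
    omega
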